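/- Let a ∈ (0,1) and x > 0, and define S_a(n,l) by the recursion in the context. Then for every integer l ≥ 1, lim_{n→∞} x^l · S_a(n,l) / ( ∑_{ℓ=0}^{n} x^ℓ · S_a(n,ℓ) ) = e^{−x/a} · (x/a)^{l−1} / (l−1)!. -/

import Mathlib

open Real Finset Filter
open Topology

/-- The numbers `S_a(n,l)` (generalized Stirling numbers up to the factor `a^{-l}`),
defined by `S_a(0,0) = 1`, `S_a(n,0) = 0` for `n ≥ 1`, `S_a(n,n) = 1`, and
`S_a(n+1,l) = (n − a·l)·S_a(n,l) + S_a(n,l−1)` for `1 ≤ l ≤ n` (and `S_a(n,l) = 0`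
for `l > n`). -/
noncomputable def Sgen (a : ℝ) : ℕ → ℕ → ℝ
  | 0, 0 => 1
  | 0, _ + 1 => 0
  | _ + 1, 0 => 0
  | n + 1, l + 1 => ((n : ℝ) - a * (l + 1)) * Sgen a n (l + 1) + Sgen a n l

lemma Sgen_zero_zero (a : ℝ) : Sgen a 0 0 = 1 := rfl

lemma Sgen_succ_succ (a : ℝ) (n l : ℕ) :
    Sgen a (n+1) (l+1) = ((n : ℝ) - a * (l + 1)) * Sgen a n (l + 1) + Sgen a n l := rfl

lemma Sgen_zero_right (a : ℝ) (n : ℕ) (hn : 1 ≤ n) : Sgen a n 0 = 0 := by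
  obtain ⟨m, rfl⟩ : ∃ m, n = m + 1 := ⟨n - 1, by omega⟩
  rfl

lemma Sgen_eq_zero (a : ℝ) : ∀ n l, n < l → Sgen a n l = 0 := by
  intro n
  induction n with
  | zero =>
    intro l hl
    obtain ⟨m, rfl⟩ : ∃ m, l = m + 1 := ⟨l - 1, by omega⟩
    rfl
  | succ n ih =>
    intro l hl
    obtain ⟨m, rfl⟩ : ∃ m, l = m + 1 := ⟨l - 1, by omega⟩
    rw [Sgen_succ_succ, ih (m+1) (by omega), ih m (by omega)]
    ring

lemma Sgen_diag (a : ℝ) (n : ℕ) : Sgen a n n = 1 := by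
  induction n with
  | zero => rfl
  | succ n ih =>
    rw [Sgen_succ_succ, Sgen_eq_zero a n (n+1) (by omega), ih]; ring

lemma Sgen_nonneg (a : ℝ) (ha : a < 1) : ∀ n l, 0 ≤ Sgen a n l := by
  intro n
  induction n with
  | zero =>
    intro l
    cases l with
    | zero => norm_num [Sgen]
    | succ m => exact le_of_eq (Sgen_eq_zero a 0 (m+1) (by omega)).symm
  | succ n ih =>
    intro l
    cases l with
    | zero =>
      rcases Nat.eq_zero_or_pos (n+1) with h | h
      · omega
      · exact le_of_eq (Sgen_zero_right a (n+1) h).symm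
    | succ m =>
      rw [Sgen_succ_succ]
      rcases Nat.lt_or_ge n (m+1) with h | h
      · rcases Nat.lt_or_ge n m with h2 | h2
        · rw [Sgen_eq_zero a n (m+1) (by omega), Sgen_eq_zero a n m h2]; norm_num
        · have : n = m := by omega
          subst this
          rw [Sgen_eq_zero a n (n+1) (by omega), Sgen_diag]; norm_num
      · have hc : (0:ℝ) ≤ (n : ℝ) - a * (m + 1) := by
          have h1 : a * ((m:ℝ) + 1) < 1 * ((m:ℝ)+1) := by
            apply mul_lt_mul_of_pos_right ha; positivity
          have h2 : ((m:ℝ) + 1) ≤ (n:ℝ) := by exact_mod_cast h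
          nlinarith
        have := ih (m+1); have := ih m
        positivity

lemma Sgen_formula (a : ℝ) : ∀ n l, Sgen a n l * (a^l * l.factorial) =
    ∑ j ∈ Finset.range (l+1), (-1:ℝ)^j * (l.choose j) *
      ∏ i ∈ Finset.range n, ((i:ℝ) - j*a) := by
  intro n
  induction n with
  | zero =>
    intro l
    simp only [Finset.range_zero, Finset.prod_empty, mul_one]
    have h := Int.alternating_sum_range_choose (n := l)
    have h' : ∑ j ∈ Finset.range (l+1), (-1:ℝ)^j * (l.choose j) =
        if l = 0 then 1 else 0 := by
      have := congrArg (fun z : ℤ => (z : ℝ)) h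
      push_cast at this
      simpa using this
    rw [h']
    cases l with
    | zero => simp [Sgen_zero_zero]
    | succ m => simp [Sgen_eq_zero a 0 (m+1) (by omega)]
  | succ n ih =>
    intro l
    cases l with
    | zero =>
      rw [Sgen_zero_right a (n+1) (by omega)]
      rw [Finset.sum_range_one]
      rw [Finset.prod_eq_zero (Finset.mem_range.mpr (Nat.succ_pos n))]
      · ring
      · push_cast; ring
    | succ l =>
      rw [Sgen_succ_succ]
      have hX := ih (l+1)
      have hY := ih l
      have key : (((n:ℝ) - a*(l+1)) * Sgen a n (l+1) + Sgen a n l) * (a^(l+1) * ((l+1).factorial : ℝ))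
          = ((n:ℝ) - a*(l+1)) * (Sgen a n (l+1) * (a^(l+1) * ((l+1).factorial:ℝ)))
            + (a*((l:ℝ)+1)) * (Sgen a n l * (a^l * (l.factorial:ℝ))) := by
        rw [Nat.factorial_succ]; push_cast; ring
      rw [key, hX, hY]
      have hext : ∑ j ∈ Finset.range (l+1), (-1:ℝ)^j * (l.choose j) *
            ∏ i ∈ Finset.range n, ((i:ℝ) - j*a)
          = ∑ j ∈ Finset.range (l+2), (-1:ℝ)^j * (l.choose j) *
            ∏ i ∈ Finset.range n, ((i:ℝ) - j*a) := by
        rw [Finset.sum_range_succ (n := l+1)]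
        simp [Nat.choose_succ_self]
      rw [hext, Finset.mul_sum, Finset.mul_sum, ← Finset.sum_add_distrib]
      apply Finset.sum_congr rfl
      intro j hj
      have hj' : j ≤ l + 1 := by simpa [Nat.lt_succ_iff] using Finset.mem_range.mp hj
      have hcc : ((l.choose j : ℝ)) * ((l:ℝ)+1) = ((l+1).choose j : ℝ) * ((l:ℝ)+1-j) := by
        have := Nat.choose_mul_succ_eq l j
        have h2 : ((l + 1 - j : ℕ) : ℝ) = (l:ℝ) + 1 - j := by
          push_cast [Nat.cast_sub hj']; ring
        calc ((l.choose j : ℝ)) * ((l:ℝ)+1) = ((l.choose j * (l+1) : ℕ) : ℝ) := by push_cast; ring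
        _ = (((l+1).choose j * (l + 1 - j) : ℕ) : ℝ) := congrArg (fun k : ℕ => (k:ℝ)) this
        _ = ((l+1).choose j : ℝ) * ((l:ℝ)+1-j) := by rw [Nat.cast_mul, h2]
      rw [Finset.prod_range_succ]
      set Q := ∏ i ∈ Finset.range n, ((i:ℝ) - j*a) with hQ
      push_cast
      linear_combination ((-1:ℝ)^j * Q * a) * hcc

noncomputable def Rr (a : ℝ) (n : ℕ) : ℝ := ∏ i ∈ Finset.Ico 1 n, ((i:ℝ) - a)

lemma Rr_pos {a : ℝ} (ha : a < 1) (n : ℕ) : 0 < Rr a n := by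
  apply Finset.prod_pos
  intro i hi
  have : 1 ≤ i := (Finset.mem_Ico.mp hi).1
  have : (1:ℝ) ≤ i := by exact_mod_cast this
  linarith

lemma Rr_succ (a : ℝ) {n : ℕ} (hn : 1 ≤ n) : Rr a (n+1) = Rr a n * ((n:ℝ) - a) :=
  Finset.prod_Ico_succ_top hn _

lemma harmonic_Ico_tendsto (m : ℕ) :
    Tendsto (fun n => ∑ i ∈ Finset.Ico m n, (1:ℝ)/i) atTop atTop := by
  have h0 : Tendsto (fun n => ∑ i ∈ Finset.range n, (1:ℝ)/i) atTop atTop := by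
    rw [← tendsto_add_atTop_iff_nat 1]
    have he : (fun n => ∑ i ∈ Finset.range (n+1), (1:ℝ)/i)
        = fun n => (1:ℝ)/((0:ℕ):ℝ) + ∑ i ∈ Finset.range n, (1:ℝ)/(i+1) := by
      funext n
      rw [Finset.sum_range_succ']
      simp [add_comm]
    rw [he]
    simp only [Nat.cast_zero, div_zero, zero_add]
    exact Real.tendsto_sum_range_one_div_nat_succ_atTop
  have key : (fun n => (∑ i ∈ Finset.range n, (1:ℝ)/i) - ∑ i ∈ Finset.range m, (1:ℝ)/i)
      =ᶠ[atTop] (fun n => ∑ i ∈ Finset.Ico m n, (1:ℝ)/i) := by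
    filter_upwards [eventually_ge_atTop m] with n hn
    have h2 : (∑ i ∈ Finset.range m, (1:ℝ)/i) + ∑ i ∈ Finset.Ico m n, (1:ℝ)/i
        = ∑ i ∈ Finset.range n, (1:ℝ)/i := Finset.sum_range_add_sum_Ico _ hn
    linarith
  exact Tendsto.congr' key (tendsto_atTop_add_const_right _ _ h0)

lemma prod_ratio_tendsto_zero {a : ℝ} (ha : 0 < a) (ha1 : a < 1) {b : ℝ} (hb : a < b) :
    Tendsto (fun n => (∏ i ∈ Finset.range n, ((i:ℝ) - b)) / Rr a n) atTop (𝓝 0) := by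
  set δ := b - a with hδ
  have hδpos : 0 < δ := by simp only [hδ]; linarith
  obtain ⟨m', hm'⟩ := exists_nat_gt b
  set m := max m' 1 with hm
  have hmb : b < (m:ℝ) := lt_of_lt_of_le hm' (by exact_mod_cast Nat.le_max_left m' 1)
  have hm1 : 1 ≤ m := Nat.le_max_right m' 1
  set T : ℕ → ℝ := fun n => ∏ i ∈ Finset.Ico m n, (((i:ℝ) - b)/((i:ℝ) - a)) with hT
  have hfac_nonneg : ∀ i : ℕ, m ≤ i → 0 ≤ ((i:ℝ) - b)/((i:ℝ) - a) := by
    intro i hi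
    have hib : b < (i:ℝ) := lt_of_lt_of_le hmb (by exact_mod_cast hi)
    have hia : a < (i:ℝ) := lt_trans hb hib
    apply div_nonneg <;> linarith
  have hfac_le : ∀ i : ℕ, m ≤ i → ((i:ℝ) - b)/((i:ℝ) - a) ≤ Real.exp (-(δ/i)) := by
    intro i hi
    have hi1 : (1:ℝ) ≤ (i:ℝ) := by exact_mod_cast le_trans hm1 hi
    have hib : b < (i:ℝ) := lt_of_lt_of_le hmb (by exact_mod_cast hi)
    have hia : a < (i:ℝ) := lt_trans hb hib
    have hne : (i:ℝ) - a ≠ 0 := by linarith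
    have h1 : ((i:ℝ) - b)/((i:ℝ) - a) = 1 - δ/((i:ℝ) - a) := by
      rw [hδ]
      field_simp
      ring
    have h2 : δ/(i:ℝ) ≤ δ/((i:ℝ) - a) := by
      apply div_le_div_of_nonneg_left (le_of_lt hδpos) (by linarith) (by linarith)
    have h4 : 1 + (-(δ/(i:ℝ))) ≤ Real.exp (-(δ/i)) := by
      have := Real.add_one_le_exp (-(δ/(i:ℝ)))
      linarith
    linarith
  have hub : Tendsto (fun n => Real.exp (-δ * ∑ i ∈ Finset.Ico m n, (1:ℝ)/i)) atTop (𝓝 0) := by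
    apply Real.tendsto_exp_atBot.comp
    exact Tendsto.const_mul_atTop_of_neg (neg_neg_iff_pos.mpr hδpos) (harmonic_Ico_tendsto m)
  have hT0 : Tendsto T atTop (𝓝 0) := by
    apply tendsto_of_tendsto_of_tendsto_of_le_of_le' (tendsto_const_nhds) hub
    · filter_upwards [eventually_ge_atTop m] with n hn
      exact Finset.prod_nonneg (fun i hi => hfac_nonneg i (Finset.mem_Ico.mp hi).1)
    · filter_upwards [eventually_ge_atTop m] with n hn
      calc T n ≤ ∏ i ∈ Finset.Ico m n, Real.exp (-(δ/i)) := by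
            apply Finset.prod_le_prod
            · intro i hi; exact hfac_nonneg i (Finset.mem_Ico.mp hi).1
            · intro i hi; exact hfac_le i (Finset.mem_Ico.mp hi).1
        _ = Real.exp (-δ * ∑ i ∈ Finset.Ico m n, (1:ℝ)/i) := by
            rw [← Real.exp_sum]
            congr 1
            rw [Finset.mul_sum]
            apply Finset.sum_congr rfl
            intro i _
            field_simp
  -- now relate the original quotient to C * T n
  set C : ℝ := (∏ i ∈ Finset.range m, ((i:ℝ) - b)) / Rr a m with hC
  have hequiv : (fun n => C * T n) =ᶠ[atTop]
      (fun n => (∏ i ∈ Finset.range n, ((i:ℝ) - b)) / Rr a n) := by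
    filter_upwards [eventually_ge_atTop m] with n hn
    have hsplit1 : (∏ i ∈ Finset.range n, ((i:ℝ) - b))
        = (∏ i ∈ Finset.range m, ((i:ℝ) - b)) * ∏ i ∈ Finset.Ico m n, ((i:ℝ) - b) :=
      (Finset.prod_range_mul_prod_Ico _ hn).symm
    have hsplit2 : Rr a n = Rr a m * ∏ i ∈ Finset.Ico m n, ((i:ℝ) - a) :=
      (Finset.prod_Ico_consecutive _ hm1 hn).symm
    have hTn : T n = (∏ i ∈ Finset.Ico m n, ((i:ℝ) - b)) / ∏ i ∈ Finset.Ico m n, ((i:ℝ) - a) := by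
      rw [hT]
      exact Finset.prod_div_distrib _ _
    have hpos2 : (0:ℝ) < ∏ i ∈ Finset.Ico m n, ((i:ℝ) - a) := by
      apply Finset.prod_pos
      intro i hi
      have : m ≤ i := (Finset.mem_Ico.mp hi).1
      have hia : a < (i:ℝ) := lt_trans hb (lt_of_lt_of_le hmb (by exact_mod_cast this))
      linarith
    have hRm : (0:ℝ) < Rr a m := Rr_pos ha1 m
    rw [hsplit1, hsplit2, hC, hTn]
    field_simp
  have h2 : Tendsto (fun n => C * T n) atTop (𝓝 (C * 0)) := hT0.const_mul C
  rw [mul_zero] at h2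
  exact Tendsto.congr' hequiv h2

lemma prod_range_sub (a : ℝ) {n : ℕ} (hn : 0 < n) :
    ∏ i ∈ Finset.range n, ((i:ℝ) - a) = ((0:ℝ) - a) * Rr a n := by
  rw [Finset.range_eq_Ico, Finset.prod_eq_prod_Ico_succ_bot hn]
  norm_num [Rr]

lemma S_ratio_tendsto {a : ℝ} (ha : 0 < a) (ha1 : a < 1) (l : ℕ) (hl : 1 ≤ l) :
    Tendsto (fun n => Sgen a n l / Rr a n) atTop
      (𝓝 (((l:ℝ) * a) / (a^l * l.factorial))) := by
  have hal : (a^l * (l.factorial:ℝ)) ≠ 0 := by positivity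
  have hrepr : ∀ n : ℕ, Sgen a n l / Rr a n =
      (∑ j ∈ Finset.range (l+1), (-1:ℝ)^j * (l.choose j) *
        ((∏ i ∈ Finset.range n, ((i:ℝ) - j*a)) / Rr a n)) / (a^l * l.factorial) := by
    intro n
    have hS : Sgen a n l = (∑ j ∈ Finset.range (l+1), (-1:ℝ)^j * (l.choose j) *
        ∏ i ∈ Finset.range n, ((i:ℝ) - j*a)) / (a^l * l.factorial) := by
      rw [eq_div_iff hal]; exact Sgen_formula a n l
    rw [hS, div_div, mul_comm (a^l*(l.factorial:ℝ)) (Rr a n), ← div_div, Finset.sum_div]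
    simp [mul_div_assoc]
  have hsum : Tendsto (fun n => ∑ j ∈ Finset.range (l+1), (-1:ℝ)^j * (l.choose j) *
      ((∏ i ∈ Finset.range n, ((i:ℝ) - j*a)) / Rr a n)) atTop (𝓝 ((l:ℝ)*a)) := by
    have htot : ((l:ℝ)*a) =
        ∑ j ∈ Finset.range (l+1), (if j = 1 then (l:ℝ)*a else 0) := by
      rw [Finset.sum_ite_eq' (Finset.range (l+1)) 1 (fun _ => (l:ℝ)*a),
        if_pos (Finset.mem_range.mpr (by omega))]
    rw [htot]
    apply tendsto_finset_sum
    intro j hj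
    rcases Nat.lt_or_ge j 2 with hj2 | hj2
    · interval_cases j
      · -- j = 0
        simp only [if_neg (by norm_num : (0:ℕ) ≠ 1)]
        apply Tendsto.congr' _ tendsto_const_nhds
        filter_upwards [eventually_ge_atTop 1] with n hn
        rw [Finset.prod_eq_zero (Finset.mem_range.mpr hn) (by norm_num)]
        norm_num
      · -- j = 1
        rw [if_pos rfl, Nat.choose_one_right]
        apply Tendsto.congr' _ tendsto_const_nhds
        filter_upwards [eventually_ge_atTop 1] with n hn
        have := prod_range_sub a (show 0 < n by omega)
        rw [show ((1:ℕ):ℝ) * a = a by norm_num, this]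
        have hRn : Rr a n ≠ 0 := ne_of_gt (Rr_pos ha1 n)
        field_simp
        ring
    · -- j ≥ 2
      have hb : a < (j:ℝ)*a := by
        have : (2:ℝ) ≤ (j:ℝ) := by exact_mod_cast hj2
        nlinarith
      have h0 := prod_ratio_tendsto_zero ha ha1 hb
      have := h0.const_mul ((-1:ℝ)^j * (l.choose j))
      rw [mul_zero] at this
      rw [if_neg (by omega : j ≠ 1)]
      exact this
  have := hsum.div_const (a^l * l.factorial)
  exact Tendsto.congr (fun n => (hrepr n).symm) this

lemma Rr_lower {a : ℝ} (ha : 0 < a) (ha1 : a < 1) (n : ℕ) :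
    (1-a)^n * (n.factorial : ℝ) ≤ Rr a (n+1) := by
  have hcard : (Finset.Ico 1 (n+1)).card = n := by simp
  have hfact : ∏ i ∈ Finset.Ico 1 (n+1), (i:ℝ) = (n.factorial : ℝ) := by
    rw [← Nat.cast_prod]
    exact_mod_cast congrArg (fun k : ℕ => (k:ℝ)) (Finset.prod_Ico_id_eq_factorial n)
  have h1 : ∏ i ∈ Finset.Ico 1 (n+1), ((1-a) * (i:ℝ)) ≤ ∏ i ∈ Finset.Ico 1 (n+1), ((i:ℝ) - a) := by
    apply Finset.prod_le_prod
    · intro i hi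
      have : (0:ℝ) ≤ (i:ℝ) := Nat.cast_nonneg i
      nlinarith
    · intro i hi
      have h1i : 1 ≤ i := (Finset.mem_Ico.mp hi).1
      have : (1:ℝ) ≤ (i:ℝ) := by exact_mod_cast h1i
      nlinarith
  calc (1-a)^n * (n.factorial : ℝ)
      = ∏ i ∈ Finset.Ico 1 (n+1), ((1-a) * (i:ℝ)) := by
        rw [Finset.prod_mul_distrib, Finset.prod_const, hcard, hfact]
    _ ≤ Rr a (n+1) := h1

lemma Sgen_le_bound {a : ℝ} (ha : 0 < a) (ha1 : a < 1) :
    ∀ n, 1 ≤ n → ∀ j : ℕ,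
      Sgen a n (j+1) ≤ Rr a n * ((min a (1-a))⁻¹)^j / (j.factorial : ℝ) := by
  set c := (min a (1-a))⁻¹ with hc
  have hminpos : 0 < min a (1-a) := lt_min ha (by linarith)
  have hcpos : 0 < c := inv_pos.mpr hminpos
  have hac : 1 ≤ a * c := by
    rw [hc]
    have h1 : min a (1-a) ≤ a := min_le_left _ _
    have := inv_anti₀ hminpos h1
    calc (1:ℝ) = a * a⁻¹ := (mul_inv_cancel₀ (ne_of_gt ha)).symm
      _ ≤ a * (min a (1-a))⁻¹ := by apply mul_le_mul_of_nonneg_left this (le_of_lt ha)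
  have h1ac : 1 ≤ (1-a) * c := by
    rw [hc]
    have h1 : min a (1-a) ≤ 1-a := min_le_right _ _
    have := inv_anti₀ hminpos h1
    calc (1:ℝ) = (1-a) * (1-a)⁻¹ := (mul_inv_cancel₀ (by linarith)).symm
      _ ≤ (1-a) * (min a (1-a))⁻¹ := by apply mul_le_mul_of_nonneg_left this (by linarith)
  intro n hn
  induction n, hn using Nat.le_induction with
  | base =>
    intro j
    cases j with
    | zero => simp [Rr, Sgen_diag a 1]
    | succ j =>
      rw [Sgen_eq_zero a 1 (j+2) (by omega)]
      have := Rr_pos ha1 1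
      positivity
  | succ n hn ih =>
    have hRn := Rr_pos ha1 n
    have hRsucc := Rr_succ a hn
    have hna : (0:ℝ) < (n:ℝ) - a := by
      have : (1:ℝ) ≤ (n:ℝ) := by exact_mod_cast hn
      linarith
    intro j
    cases j with
    | zero =>
      have key := Sgen_succ_succ a n 0
      norm_num at key
      rw [key, Sgen_zero_right a n hn]
      have h0 := ih 0
      simp only [pow_zero, Nat.factorial_zero, Nat.cast_one, mul_one, div_one] at h0 ⊢
      rw [hRsucc]
      have hco : (0:ℝ) ≤ (n:ℝ) - a * (0+1) := by norm_num; linarith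
      have hSnn := Sgen_nonneg a ha1 n 1
      nlinarith
    | succ j =>
      rcases lt_trichotomy n (j+1) with hcase | hcase | hcase
      · -- n ≤ j : Sgen a (n+1) (j+2) = 0
        rw [Sgen_eq_zero a (n+1) (j+2) (by omega)]
        have := Rr_pos ha1 (n+1)
        positivity
      · -- n = j+1 : diagonal
        have hd : j + 2 = n + 1 := by omega
        rw [hd, Sgen_diag a (n+1)]
        have hjn : j + 1 = n := by omega
        rw [hjn]
        have hfpos : (0:ℝ) < (n.factorial : ℝ) := by exact_mod_cast Nat.factorial_pos n
        rw [le_div_iff₀ hfpos]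
        calc (1:ℝ) * (n.factorial:ℝ) = (n.factorial:ℝ) := one_mul _
          _ ≤ ((1-a)*c)^n * (n.factorial:ℝ) := by
              have hp : (1:ℝ) ≤ ((1-a)*c)^n := by simpa using pow_le_pow_left₀ (zero_le_one (α := ℝ)) h1ac n
              nlinarith [hfpos]
          _ = ((1-a)^n * (n.factorial:ℝ)) * c^n := by rw [mul_pow]; ring
          _ ≤ Rr a (n+1) * c^n := by
              apply mul_le_mul_of_nonneg_right (Rr_lower ha ha1 n) (by positivity)
      · -- j + 2 ≤ n : main case
        have hco : (0:ℝ) ≤ (n:ℝ) - a * ((j:ℝ)+2) := by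
          have h2n : ((j:ℝ)+2) ≤ (n:ℝ) := by exact_mod_cast hcase
          nlinarith
        have key : Sgen a (n+1) (j+2) = ((n:ℝ) - a * ((j:ℝ)+1+1)) * Sgen a n (j+2) + Sgen a n (j+1) := by
          have := Sgen_succ_succ a n (j+1)
          push_cast at this ⊢
          convert this using 3 <;> push_cast <;> ring
        rw [key]
        have h1 := ih (j+1)
        have h2 := ih j
        have hfj : (0:ℝ) < (j.factorial : ℝ) := by exact_mod_cast Nat.factorial_pos j
        have hfj1 : ((j+1).factorial : ℝ) = ((j:ℝ)+1) * (j.factorial : ℝ) := by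
          rw [Nat.factorial_succ]; push_cast; ring
        have step1 : ((n:ℝ) - a * ((j:ℝ)+1+1)) * Sgen a n (j+2) + Sgen a n (j+1)
            ≤ ((n:ℝ) - a * ((j:ℝ)+1+1)) * (Rr a n * c^(j+1) / ((j+1).factorial : ℝ))
              + Rr a n * c^j / (j.factorial : ℝ) := by
          apply add_le_add _ h2
          apply mul_le_mul_of_nonneg_left _ (by push_cast at hco ⊢; linarith)
          exact h1
        have step2 : ((n:ℝ) - a * ((j:ℝ)+1+1)) * (Rr a n * c^(j+1) / ((j+1).factorial : ℝ))
              + Rr a n * c^j / (j.factorial : ℝ)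
            ≤ Rr a (n+1) * c^(j+1) / ((j+1).factorial : ℝ) := by
          rw [hRsucc]
          have e : ((n:ℝ) - a) * (Rr a n * c^(j+1) / ((j+1).factorial : ℝ))
              - (((n:ℝ) - a * ((j:ℝ)+1+1)) * (Rr a n * c^(j+1) / ((j+1).factorial : ℝ))
                + Rr a n * c^j / (j.factorial : ℝ))
              = (a*c - 1) * (Rr a n * c^j / (j.factorial : ℝ)) := by
            rw [hfj1]
            field_simp
            ring
          have hY : (0:ℝ) ≤ Rr a n * c^j / (j.factorial : ℝ) := by positivity
          have : (0:ℝ) ≤ (a*c - 1) * (Rr a n * c^j / (j.factorial : ℝ)) :=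
            mul_nonneg (by linarith) hY
          have e2 : Rr a n * ((n:ℝ) - a) * c^(j+1) / ((j+1).factorial : ℝ)
              = ((n:ℝ) - a) * (Rr a n * c^(j+1) / ((j+1).factorial : ℝ)) := by ring
          rw [e2]
          linarith
        linarith

/-- **Table 1, first row (number of clusters, `a ∈ (0,1)`)**: for each `l ≥ 1`,
`x^l S_a(n,l) / ∑_{ℓ=0}^n x^ℓ S_a(n,ℓ) → e^{−x/a} (x/a)^{l−1}/(l−1)!` as `n → ∞`. -/
theorem cluster_number_limit_pos_discount (a x : ℝ)
    (ha : a ∈ Set.Ioo (0 : ℝ) 1) (hx : 0 < x) (l : ℕ) (hl : 1 ≤ l) :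
    Tendsto (fun n : ℕ =>
        x ^ l * Sgen a n l / ∑ j ∈ Finset.range (n + 1), x ^ j * Sgen a n j)
      atTop
      (nhds (Real.exp (-(x / a)) * (x / a) ^ (l - 1) / (Nat.factorial (l - 1) : ℝ))) := by
  obtain ⟨ha0, ha1⟩ := ha
  set c := (min a (1-a))⁻¹ with hc
  have hcpos : 0 < c := inv_pos.mpr (lt_min ha0 (by linarith))
  set f : ℕ → ℕ → ℝ := fun n j => x^j * Sgen a n j / Rr a n with hf
  set g : ℕ → ℝ := fun j => if j = 0 then 0 else
      x^j * (((j:ℝ)) * a / (a^j * (j.factorial : ℝ))) with hg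
  set bound : ℕ → ℝ := fun j => if j = 0 then 0 else
      x^j * c^(j-1) / (((j-1).factorial : ℝ)) with hbd
  -- summability of the bound
  have hsum_b : Summable bound := by
    rw [← summable_nat_add_iff 1]
    have he : (fun j => bound (j+1)) = fun j => x * ((x*c)^j / (j.factorial : ℝ)) := by
      funext j
      simp only [hbd, Nat.add_sub_cancel, if_neg (Nat.succ_ne_zero j)]
      rw [mul_pow, pow_succ]
      ring
    rw [he]
    exact (Real.summable_pow_div_factorial (x*c)).mul_left x
  -- pointwise limits
  have hab : ∀ j : ℕ, Tendsto (fun n => f n j) atTop (𝓝 (g j)) := by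
    intro j
    cases j with
    | zero =>
      have : g 0 = 0 := by simp [hg]
      rw [this]
      apply Tendsto.congr' _ tendsto_const_nhds
      filter_upwards [eventually_ge_atTop 1] with n hn
      simp [hf, Sgen_zero_right a n hn]
    | succ j =>
      have hgj : g (j+1) = x^(j+1) * (((j:ℝ)+1) * a / (a^(j+1) * ((j+1).factorial : ℝ))) := by
        simp only [hg, if_neg (Nat.succ_ne_zero j)]
        push_cast
        ring_nf
      rw [hgj]
      have h1 := (S_ratio_tendsto ha0 ha1 (j+1) (by omega)).const_mul (x^(j+1))
      apply Tendsto.congr' _ _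
      · exact fun n => x^(j+1) * (Sgen a n (j+1) / Rr a n)
      · filter_upwards with n
        simp only [hf]
        ring
      · convert h1 using 2
        push_cast
        ring
  -- uniform bound
  have h_bound : ∀ᶠ n in atTop, ∀ k, ‖f n k‖ ≤ bound k := by
    filter_upwards [eventually_ge_atTop 1] with n hn
    intro k
    have hRpos := Rr_pos ha1 n
    cases k with
    | zero =>
      simp [hf, hbd, Sgen_zero_right a n hn]
    | succ j =>
      have hb := Sgen_le_bound ha0 ha1 n hn j
      have hnn : 0 ≤ f n (j+1) := by
        simp only [hf]
        have := Sgen_nonneg a ha1 n (j+1)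
        positivity
      rw [Real.norm_eq_abs, abs_of_nonneg hnn]
      simp only [hf, hbd, if_neg (Nat.succ_ne_zero j), Nat.add_sub_cancel]
      rw [← hc] at hb
      have h2 : Sgen a n (j+1) / Rr a n ≤ c^j / (j.factorial:ℝ) := by
        rw [div_le_iff₀ hRpos]
        calc Sgen a n (j+1) ≤ Rr a n * c^j / (j.factorial:ℝ) := hb
          _ = c^j / (j.factorial:ℝ) * Rr a n := by ring
      rw [mul_div_assoc, mul_div_assoc]
      exact mul_le_mul_of_nonneg_left h2 (by positivity)
  -- Tannery
  have htsum := tendsto_tsum_of_dominated_convergence hsum_b hab h_bound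
  -- identify ∑' k, f n k with the finite sum
  have hfin : ∀ᶠ n in atTop, (∑' k, f n k)
      = (∑ j ∈ Finset.range (n+1), x^j * Sgen a n j) / Rr a n := by
    filter_upwards with n
    rw [Finset.sum_div]
    apply tsum_eq_sum
    intro j hj
    have : n < j := by simpa [Nat.lt_succ_iff] using Finset.mem_range.not.mp hj
    simp [hf, Sgen_eq_zero a n j this]
  -- compute ∑' g
  have hgsucc : ∀ j : ℕ, g (j+1) = x * ((x/a)^j / (j.factorial : ℝ)) := by
    intro j
    simp only [hg, if_neg (Nat.succ_ne_zero j)]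
    rw [Nat.factorial_succ, div_pow]
    push_cast
    field_simp
    ring
  have hsum_g' : Summable (fun j => g (j+1)) := by
    have he : (fun j => g (j+1)) = fun j => x * ((x/a)^j / (j.factorial : ℝ)) := funext hgsucc
    rw [he]
    exact (Real.summable_pow_div_factorial (x/a)).mul_left x
  have hsum_g : Summable g := (summable_nat_add_iff 1).mp hsum_g'
  have hexp : Real.exp (x/a) = ∑' j : ℕ, (x/a)^j / (j.factorial : ℝ) := by
    rw [Real.exp_eq_exp_ℝ, NormedSpace.exp_eq_tsum_div]
  have htg : (∑' k, g k) = x * Real.exp (x/a) := by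
    rw [hsum_g.tsum_eq_zero_add]
    have h0 : g 0 = 0 := by simp [hg]
    rw [h0, zero_add]
    calc (∑' j, g (j+1)) = ∑' j, x * ((x/a)^j / (j.factorial : ℝ)) := by
          exact tsum_congr hgsucc
      _ = x * ∑' j, (x/a)^j / (j.factorial : ℝ) := tsum_mul_left
      _ = x * Real.exp (x/a) := by rw [hexp]
  -- denominator limit
  have hden : Tendsto (fun n => (∑ j ∈ Finset.range (n+1), x^j * Sgen a n j) / Rr a n)
      atTop (𝓝 (x * Real.exp (x/a))) := by
    rw [← htg]
    exact Tendsto.congr' hfin htsum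
  -- numerator limit
  have hnum : Tendsto (fun n => x^l * Sgen a n l / Rr a n) atTop
      (𝓝 (x^l * (((l:ℝ)) * a / (a^l * (l.factorial : ℝ))))) := by
    have h1 := (S_ratio_tendsto ha0 ha1 l hl).const_mul (x^l)
    apply Tendsto.congr _ h1
    intro n
    ring
  have hDne : x * Real.exp (x/a) ≠ 0 := by positivity
  have hdiv := hnum.div hden hDne
  have hcongr : ∀ n : ℕ, (x^l * Sgen a n l / Rr a n) /
      ((∑ j ∈ Finset.range (n+1), x^j * Sgen a n j) / Rr a n)
      = x^l * Sgen a n l / ∑ j ∈ Finset.range (n+1), x^j * Sgen a n j := by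
    intro n
    exact div_div_div_cancel_right₀ (ne_of_gt (Rr_pos ha1 n)) _ _
  have hfinal := Tendsto.congr hcongr hdiv
  convert hfinal using 2
  -- identify the limit value
  obtain ⟨m, rfl⟩ : ∃ m, l = m + 1 := ⟨l - 1, by omega⟩
  have hfm : ((m+1).factorial : ℝ) = ((m:ℝ)+1) * (m.factorial : ℝ) := by
    rw [Nat.factorial_succ]; push_cast; ring
  have hexpne : Real.exp (x/a) ≠ 0 := Real.exp_ne_zero _
  have hfmne : (m.factorial : ℝ) ≠ 0 := by positivity
  rw [Real.exp_neg]
  simp only [Nat.add_sub_cancel]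
  rw [div_pow, hfm]
  field_simp
  push_cast
  ring
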